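/- With v and h as defined (v(\theta) = -\log(1 - (1/2)\sum_j (S_j/S - \pi_j)^2), h(\theta) = (S_1/S - \pi_1, \dots, S_{m-1}/S - \pi_{m-1})), the inner product satisfies \langle \nabla v(\theta), h(\theta) \rangle = -(1/\Lambda(\theta)) ( b\,\sigma_\xi^2 + b(1-b)\mu_\xi^2 ) \le 0, where \Lambda(\theta) = 1 - (1/2)\sum_j (S_j/S - \pi_j)^2, b = \sum_{j=1}^{m-1} S_j/S, and \mu_\xi, \sigma_\xi^2 are the mean and variance of the random variable taking value S_i/S - \pi_i with probability S_i/(bS). Moreover equality holds if and only if h(\theta) = 0. -/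

import Mathlib

set_option maxHeartbeats 1600000 in
theorem stmt_13 (d : ℕ) (hd : 1 ≤ d)
    (w π : Fin (d + 1) → ℝ) (hw : ∀ i, 0 < w i)
    (hπ : ∀ i, 0 < π i) (hπsum : ∑ i, π i = 1)
    (Si : (Fin d → ℝ) → Fin d → ℝ)
    (hSi : ∀ θ i, Si θ i = w i.castSucc * Real.exp (-θ i))
    (Stot : (Fin d → ℝ) → ℝ)
    (hStot : ∀ θ, Stot θ = (∑ i : Fin d, Si θ i) + w (Fin.last d))
    (h : (Fin d → ℝ) → Fin d → ℝ)
    (hh : ∀ θ i, h θ i = Si θ i / Stot θ - π i.castSucc)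
    (Λ : (Fin d → ℝ) → ℝ)
    (hΛ : ∀ θ, Λ θ = 1 - (1 / 2) * ∑ j : Fin d, (Si θ j / Stot θ - π j.castSucc) ^ 2)
    (v : (Fin d → ℝ) → ℝ)
    (hv : ∀ θ, v θ = -Real.log (Λ θ))
    (b μξ σξ2 : (Fin d → ℝ) → ℝ)
    (hb : ∀ θ, b θ = ∑ j : Fin d, Si θ j / Stot θ)
    (hμ : ∀ θ, μξ θ = ∑ j : Fin d,
      (Si θ j / Stot θ - π j.castSucc) * (Si θ j / (b θ * Stot θ)))
    (hσ : ∀ θ, σξ2 θ = (∑ j : Fin d,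
      (Si θ j / Stot θ - π j.castSucc) ^ 2 * (Si θ j / (b θ * Stot θ))) - (μξ θ) ^ 2) :
    ∀ θ : Fin d → ℝ,
      fderiv ℝ v θ (h θ)
          = -(1 / Λ θ) * (b θ * σξ2 θ + b θ * (1 - b θ) * (μξ θ) ^ 2) ∧
        fderiv ℝ v θ (h θ) ≤ 0 ∧
        (fderiv ℝ v θ (h θ) = 0 ↔ h θ = 0) := by
  intro θ
  classical
  -- basic positivity
  have hSpos : ∀ j : Fin d, 0 < Si θ j := by
    intro j; rw [hSi]
    have := hw j.castSucc
    positivity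
  have hStpos : 0 < Stot θ := by
    rw [hStot]
    have h1 : 0 ≤ ∑ i : Fin d, Si θ i := Finset.sum_nonneg fun i _ => (hSpos i).le
    linarith [hw (Fin.last d)]
  have hStne : Stot θ ≠ 0 := hStpos.ne'
  set f : Fin d → ℝ := fun j => Si θ j / Stot θ with hfdef
  have hfpos : ∀ j, 0 < f j := fun j => div_pos (hSpos j) hStpos
  set bb : ℝ := ∑ j : Fin d, f j with hbbdef
  have hbθ : b θ = bb := by rw [hb]
  have hbbpos : 0 < bb := Finset.sum_pos (fun j _ => hfpos j) ⟨⟨0, hd⟩, Finset.mem_univ _⟩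
  have hbb1 : bb < 1 := by
    have e1 : bb = (∑ j : Fin d, Si θ j) / Stot θ := by
      rw [hbbdef, Finset.sum_div]
    rw [e1, div_lt_one hStpos, hStot]
    linarith [hw (Fin.last d)]
  have hfle : ∀ j, f j ≤ bb := by
    intro j
    exact Finset.single_le_sum (fun i _ => (hfpos i).le) (Finset.mem_univ j)
  set sπ : ℝ := ∑ j : Fin d, π j.castSucc with hsπdef
  have hsπ1 : sπ < 1 := by
    have := Fin.sum_univ_castSucc (n := d) (f := π)
    rw [hπsum] at this
    have hl := hπ (Fin.last d)
    rw [hsπdef]; linarith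
  have hπle : ∀ j : Fin d, π j.castSucc ≤ sπ := by
    intro j
    exact Finset.single_le_sum (fun i _ => (hπ i.castSucc).le) (Finset.mem_univ j)
  -- Λ is positive
  have hΛpos : 0 < Λ θ := by
    have e1 : ∀ j : Fin d, (Si θ j / Stot θ - π j.castSucc) ^ 2
        ≤ f j * bb + π j.castSucc * sπ := by
      intro j
      have h1 := hfle j
      have h2 := hπle j
      have h3 := hfpos j
      have h4 := hπ j.castSucc
      nlinarith
    have e2 : ∑ j : Fin d, (Si θ j / Stot θ - π j.castSucc) ^ 2
        ≤ bb * bb + sπ * sπ := by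
      calc ∑ j : Fin d, (Si θ j / Stot θ - π j.castSucc) ^ 2
          ≤ ∑ j : Fin d, (f j * bb + π j.castSucc * sπ) :=
            Finset.sum_le_sum fun j _ => e1 j
        _ = bb * bb + sπ * sπ := by
            rw [Finset.sum_add_distrib, ← Finset.sum_mul, ← Finset.sum_mul]
    have hsπ0 : 0 < sπ :=
      Finset.sum_pos (fun j _ => hπ j.castSucc) ⟨⟨0, hd⟩, Finset.mem_univ _⟩
    rw [hΛ]
    nlinarith
  have hΛne : Λ θ ≠ 0 := hΛpos.ne'
  -- derivatives
  have hA : ∀ j : Fin d, HasFDerivAt (fun t => Si t j)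
      ((-(Si θ j)) • (ContinuousLinearMap.proj j : (Fin d → ℝ) →L[ℝ] ℝ)) θ := by
    intro j
    have e : (fun t : Fin d → ℝ => Si t j) = fun t => w j.castSucc * Real.exp (-(t j)) :=
      funext fun t => hSi t j
    rw [e]
    have h1 : HasFDerivAt (fun t : Fin d → ℝ => -(t j))
        (-(ContinuousLinearMap.proj j : (Fin d → ℝ) →L[ℝ] ℝ)) θ :=
      ((ContinuousLinearMap.proj j : (Fin d → ℝ) →L[ℝ] ℝ).hasFDerivAt (x := θ)).neg
    have h2 := (Real.hasDerivAt_exp (-(θ j))).comp_hasFDerivAt θ h1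
    have h3 := h2.const_mul (w j.castSucc)
    convert h3 using 1
    all_goals try rfl
    rw [hSi]
    ext u
    simp
    ring
  set A : Fin d → ((Fin d → ℝ) →L[ℝ] ℝ) :=
    fun j => (-(Si θ j)) • (ContinuousLinearMap.proj j : (Fin d → ℝ) →L[ℝ] ℝ) with hAdef
  set B : (Fin d → ℝ) →L[ℝ] ℝ := ∑ j : Fin d, A j with hBdef
  set G : Fin d → ((Fin d → ℝ) →L[ℝ] ℝ) :=
    fun j => (Si θ j) • ((-(Stot θ ^ 2)⁻¹) • B) + (Stot θ)⁻¹ • A j with hGdef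
  have hSt : HasFDerivAt Stot B θ := by
    have e : Stot = fun t => (∑ j : Fin d, Si t j) + w (Fin.last d) := funext hStot
    rw [e, hBdef]
    exact (HasFDerivAt.fun_sum fun j _ => hA j).add_const _
  have hInv : HasFDerivAt (fun t => (Stot t)⁻¹) ((-(Stot θ ^ 2)⁻¹) • B) θ :=
    (hasDerivAt_inv hStne).comp_hasFDerivAt θ hSt
  have hg : ∀ j : Fin d, HasFDerivAt (fun t => Si t j / Stot t - π j.castSucc) (G j) θ := by
    intro j
    have e : (fun t => Si t j / Stot t - π j.castSucc)
        = fun t => Si t j * (Stot t)⁻¹ - π j.castSucc := by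
      funext t; rw [div_eq_mul_inv]
    rw [e, hGdef]
    exact (((hA j).mul hInv).sub_const _)
  have hΛd : HasFDerivAt Λ
      (-((1/2 : ℝ) • ∑ j : Fin d,
        ((Si θ j / Stot θ - π j.castSucc) • G j + (Si θ j / Stot θ - π j.castSucc) • G j)) : (Fin d → ℝ) →L[ℝ] ℝ) θ := by
    have e : Λ = fun t => 1 - (1/2 : ℝ) * ∑ j : Fin d, (Si t j / Stot t - π j.castSucc) ^ 2 :=
      funext hΛ
    rw [e]
    have hsq : ∀ j : Fin d, HasFDerivAt
        (fun t => (Si t j / Stot t - π j.castSucc) ^ 2)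
        ((Si θ j / Stot θ - π j.castSucc) • G j + (Si θ j / Stot θ - π j.castSucc) • G j) θ := by
      intro j
      have e2 : (fun t => (Si t j / Stot t - π j.castSucc) ^ 2)
          = fun t => (Si t j / Stot t - π j.castSucc) * (Si t j / Stot t - π j.castSucc) := by
        funext t; ring
      rw [e2]
      exact (hg j).mul (hg j)
    exact ((HasFDerivAt.fun_sum fun j _ => hsq j).const_mul (1/2 : ℝ)).const_sub 1
  have hvd : HasFDerivAt v
      (-((Λ θ)⁻¹ • (-((1/2 : ℝ) • ∑ j : Fin d,
        ((Si θ j / Stot θ - π j.castSucc) • G j + (Si θ j / Stot θ - π j.castSucc) • G j)))) : (Fin d → ℝ) →L[ℝ] ℝ) θ := by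
    have e : v = fun t => -Real.log (Λ t) := funext hv
    rw [e]
    exact ((Real.hasDerivAt_log hΛne).comp_hasFDerivAt θ hΛd).neg
  -- key scalar quantities
  set P : ℝ := ∑ j : Fin d, (h θ j) ^ 2 * f j with hPdef
  set Q : ℝ := ∑ j : Fin d, (h θ j) * f j with hQdef
  have hgf : ∀ j : Fin d, Si θ j / Stot θ - π j.castSucc = h θ j := fun j => (hh θ j).symm
  -- value of G j at (h θ)
  have hGu : ∀ j : Fin d, G j (h θ) = f j * Q - f j * (h θ j) := by
    intro j
    have hBu : B (h θ) = ∑ k : Fin d, (-(Si θ k)) * (h θ k) := by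
      rw [hBdef, ContinuousLinearMap.sum_apply]
      refine Finset.sum_congr rfl fun k _ => ?_
      simp [hAdef]
    have hsum : ∑ k : Fin d, (-(Si θ k)) * (h θ k) = -(Stot θ * Q) := by
      rw [hQdef, Finset.mul_sum, ← Finset.sum_neg_distrib]
      refine Finset.sum_congr rfl fun k _ => ?_
      rw [hfdef]
      field_simp
    rw [hGdef]
    simp only [ContinuousLinearMap.add_apply, ContinuousLinearMap.smul_apply,
      ContinuousLinearMap.proj_apply, smul_eq_mul, hAdef]
    rw [hBu, hsum, hfdef]
    field_simp
    ring
  -- the scalar form of the derivative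
  have key : fderiv ℝ v θ (h θ) = -(1 / Λ θ) * (P - Q ^ 2) := by
    rw [hvd.fderiv]
    simp only [ContinuousLinearMap.neg_apply, ContinuousLinearMap.smul_apply,
      ContinuousLinearMap.sum_apply, ContinuousLinearMap.add_apply, smul_eq_mul]
    have e1 : ∑ j : Fin d,
        ((Si θ j / Stot θ - π j.castSucc) * G j (h θ)
          + (Si θ j / Stot θ - π j.castSucc) * G j (h θ))
        = 2 * Q ^ 2 - 2 * P := by
      have e2 : ∀ j : Fin d,
          (Si θ j / Stot θ - π j.castSucc) * G j (h θ)
            + (Si θ j / Stot θ - π j.castSucc) * G j (h θ)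
          = 2 * Q * ((h θ j) * f j) - 2 * ((h θ j) ^ 2 * f j) := by
        intro j
        rw [hgf j, hGu j]
        ring
      rw [Finset.sum_congr rfl fun j _ => e2 j, Finset.sum_sub_distrib,
        ← Finset.mul_sum, ← Finset.mul_sum, ← hQdef, ← hPdef]
      ring
    rw [e1]
    ring
  -- identify RHS with P - Q^2
  have hbbne : bb ≠ 0 := hbbpos.ne'
  have hμQ : μξ θ = Q / bb := by
    rw [hμ, hbθ, hQdef, Finset.sum_div]
    refine Finset.sum_congr rfl fun j _ => ?_
    rw [hgf j]
    show h θ j * (Si θ j / (bb * Stot θ)) = h θ j * f j / bb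
    rw [mul_comm bb (Stot θ), ← div_div, mul_div_assoc]
  have hσP : σξ2 θ = P / bb - (Q / bb) ^ 2 := by
    rw [hσ, hμQ, hbθ]
    congr 1
    rw [hPdef, Finset.sum_div]
    refine Finset.sum_congr rfl fun j _ => ?_
    rw [hgf j]
    show h θ j ^ 2 * (Si θ j / (bb * Stot θ)) = h θ j ^ 2 * f j / bb
    rw [mul_comm bb (Stot θ), ← div_div, mul_div_assoc]
  have hRHS : b θ * σξ2 θ + b θ * (1 - b θ) * μξ θ ^ 2 = P - Q ^ 2 := by
    rw [hbθ, hμQ, hσP]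
    field_simp
    ring
  -- Cauchy–Schwarz
  have hCS : Q ^ 2 ≤ bb * P := by
    have := Finset.sum_sq_le_sum_mul_sum_of_sq_eq_mul Finset.univ
      (r := fun j : Fin d => h θ j * f j)
      (f := fun j : Fin d => f j)
      (g := fun j : Fin d => (h θ j) ^ 2 * f j)
      (fun j _ => (hfpos j).le)
      (fun j _ => by have := (hfpos j).le; positivity)
      (fun j _ => by ring)
    rw [hQdef, hPdef, hbbdef]
    exact this
  have hPnn : 0 ≤ P := by
    rw [hPdef]
    exact Finset.sum_nonneg fun j _ => by have := (hfpos j).le; positivity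
  have hQP : 0 ≤ P - Q ^ 2 := by nlinarith
  refine ⟨by rw [key, hRHS], ?_, ?_⟩
  · rw [key]
    have h1 : 0 < 1 / Λ θ := by positivity
    nlinarith
  · constructor
    · intro h0
      rw [key] at h0
      have hPQ : P - Q ^ 2 = 0 := by
        have h1 : 0 < 1 / Λ θ := by positivity
        nlinarith
      have hP0 : P = 0 := by nlinarith
      have hP0' : ∑ j : Fin d, (h θ j) ^ 2 * f j = 0 := by rw [← hPdef]; exact hP0
      have hall := (Finset.sum_eq_zero_iff_of_nonneg
        (fun j _ => by have := (hfpos j).le; positivity)).1 hP0'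
      funext j
      have hj := hall j (Finset.mem_univ j)
      have := hfpos j
      have h2 : (h θ j) ^ 2 = 0 := by
        rcases mul_eq_zero.1 hj with h3 | h3
        · exact h3
        · exact absurd h3 this.ne'
      exact pow_eq_zero_iff (by norm_num) |>.1 h2
    · intro h0
      have hP0 : P = 0 := by
        rw [hPdef]; apply Finset.sum_eq_zero; intro j _; rw [h0]; simp
      have hQ0 : Q = 0 := by
        rw [hQdef]; apply Finset.sum_eq_zero; intro j _; rw [h0]; simp
      rw [key, hP0, hQ0]
      ring
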